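/- For every positive integer N, all points z_1, …, z_N ∈ ℂ with |z_i| < 1/√2 for each i, and all scalars c_1, …, c_N ∈ ℂ, the sum Σ_{i,j=1}^{N} c_i · conj(c_j) / (1 − 2·Re(z_i·conj(z_j))) is a nonnegative real number; that is, the kernel k(z,w) = 1/(1 − z·conj(w) − conj(z)·w) is positive definite on the open disk |z| < 1/√2. (Note that 1 − 2·Re(z_i·conj(z_j)) > 0 for such points.) -/

import Mathlib

open Complex ComplexConjugate Finset
open scoped ComplexOrder

/-- Each "moment" term of the expanded kernel is nonnegative. -/
lemma drury_arveson_term_nonneg (N : ℕ) (z : Fin N → ℂ) (c : Fin N → ℂ) (n : ℕ) :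
    (0 : ℂ) ≤ ∑ i, ∑ j,
      c i * conj (c j) * (z i * conj (z j) + conj (z i) * z j) ^ n := by
  have key : ∑ i, ∑ j, c i * conj (c j) * (z i * conj (z j) + conj (z i) * z j) ^ n
      = ∑ k ∈ range (n + 1), ((n.choose k : ℂ) *
        ((∑ i, c i * (z i) ^ k * (conj (z i)) ^ (n - k)) *
          conj (∑ i, c i * (z i) ^ k * (conj (z i)) ^ (n - k)))) := by
    have h1 : ∀ i j : Fin N,
        c i * conj (c j) * (z i * conj (z j) + conj (z i) * z j) ^ n
        = ∑ k ∈ range (n + 1), (n.choose k : ℂ) *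
            ((c i * (z i) ^ k * (conj (z i)) ^ (n - k)) *
              conj (c j * (z j) ^ k * (conj (z j)) ^ (n - k))) := by
      intro i j
      rw [add_pow, Finset.mul_sum]
      refine Finset.sum_congr rfl fun k _ => ?_
      simp only [map_mul, map_pow, Complex.conj_conj, mul_pow]
      ring
    calc ∑ i, ∑ j, c i * conj (c j) * (z i * conj (z j) + conj (z i) * z j) ^ n
        = ∑ i, ∑ j, ∑ k ∈ range (n + 1), (n.choose k : ℂ) *
            ((c i * (z i) ^ k * (conj (z i)) ^ (n - k)) *
              conj (c j * (z j) ^ k * (conj (z j)) ^ (n - k))) := by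
          exact Finset.sum_congr rfl fun i _ => Finset.sum_congr rfl fun j _ => h1 i j
      _ = ∑ k ∈ range (n + 1), ∑ i, ∑ j, (n.choose k : ℂ) *
            ((c i * (z i) ^ k * (conj (z i)) ^ (n - k)) *
              conj (c j * (z j) ^ k * (conj (z j)) ^ (n - k))) := by
          calc ∑ i : Fin N, ∑ j : Fin N, ∑ k ∈ range (n + 1), (n.choose k : ℂ) *
                ((c i * (z i) ^ k * (conj (z i)) ^ (n - k)) *
                  conj (c j * (z j) ^ k * (conj (z j)) ^ (n - k)))
              = ∑ i : Fin N, ∑ k ∈ range (n + 1), ∑ j : Fin N, (n.choose k : ℂ) *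
                ((c i * (z i) ^ k * (conj (z i)) ^ (n - k)) *
                  conj (c j * (z j) ^ k * (conj (z j)) ^ (n - k))) :=
                Finset.sum_congr rfl fun i _ => Finset.sum_comm
            _ = ∑ k ∈ range (n + 1), ∑ i : Fin N, ∑ j : Fin N, (n.choose k : ℂ) *
                ((c i * (z i) ^ k * (conj (z i)) ^ (n - k)) *
                  conj (c j * (z j) ^ k * (conj (z j)) ^ (n - k))) := Finset.sum_comm
      _ = ∑ k ∈ range (n + 1), ((n.choose k : ℂ) *
            ((∑ i, c i * (z i) ^ k * (conj (z i)) ^ (n - k)) *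
              conj (∑ i, c i * (z i) ^ k * (conj (z i)) ^ (n - k)))) := by
          refine Finset.sum_congr rfl fun k _ => ?_
          rw [map_sum, Finset.sum_mul_sum, Finset.mul_sum]
          refine Finset.sum_congr rfl fun i _ => ?_
          rw [Finset.mul_sum]
  rw [key]
  refine Finset.sum_nonneg fun k _ => ?_
  have h2 : (0 : ℂ) ≤ (n.choose k : ℂ) := by
    rw [show ((n.choose k : ℂ)) = ((n.choose k : ℝ) : ℂ) by push_cast; ring]
    exact Complex.zero_le_real.mpr (by positivity)
  have h3 : (0 : ℂ) ≤ (∑ i, c i * (z i) ^ k * (conj (z i)) ^ (n - k)) *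
      conj (∑ i, c i * (z i) ^ k * (conj (z i)) ^ (n - k)) := by
    rw [Complex.mul_conj]
    exact Complex.zero_le_real.mpr (Complex.normSq_nonneg _)
  exact mul_nonneg h2 h3

theorem drury_arveson_kernel_posdef (N : ℕ) (hN : 0 < N)
    (z : Fin N → ℂ) (hz : ∀ i, ‖z i‖ < 1 / Real.sqrt 2) (c : Fin N → ℂ) :
    0 ≤ ∑ i, ∑ j, c i * conj (c j) /
      ((1 - 2 * (z i * conj (z j)).re : ℝ) : ℂ) := by
  -- the kernel argument
  set r : Fin N → Fin N → ℂ := fun i j => ((2 * (z i * conj (z j)).re : ℝ) : ℂ) with hr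
  have hnorm : ∀ i j, ‖r i j‖ < 1 := by
    intro i j
    have h1 : |((z i * conj (z j)).re)| ≤ ‖z i‖ * ‖z j‖ := by
      calc |((z i * conj (z j)).re)| ≤ ‖z i * conj (z j)‖ :=
            Complex.abs_re_le_norm _
        _ = ‖z i‖ * ‖z j‖ := by
            rw [norm_mul]; simp
    have hs2 : (0:ℝ) < Real.sqrt 2 := by positivity
    have h2 : ‖z i‖ * ‖z j‖ < (1 / Real.sqrt 2) * (1 / Real.sqrt 2) := by
      have := hz i; have := hz j
      exact mul_lt_mul'' (hz i) (hz j) (norm_nonneg _) (norm_nonneg _)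
    have h3 : (1 / Real.sqrt 2) * (1 / Real.sqrt 2) = 1 / 2 := by
      rw [div_mul_div_comm, one_mul, Real.mul_self_sqrt (by norm_num)]
    rw [hr]
    simp only [Complex.norm_real, Real.norm_eq_abs, abs_mul]
    rw [show |(2:ℝ)| = 2 by norm_num]
    calc 2 * |((z i * conj (z j)).re)| ≤ 2 * (‖z i‖ * ‖z j‖) := by
          nlinarith
      _ < 2 * (1/2) := by nlinarith
      _ = 1 := by norm_num
  -- geometric series for each pair
  have hgeom : ∀ i j, HasSum (fun n : ℕ => c i * conj (c j) * (r i j) ^ n)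
      (c i * conj (c j) / ((1 - 2 * (z i * conj (z j)).re : ℝ) : ℂ)) := by
    intro i j
    have h := (hasSum_geometric_of_norm_lt_one (hnorm i j)).mul_left (c i * conj (c j))
    have hx : ((1 - 2 * (z i * conj (z j)).re : ℝ) : ℂ) = 1 - r i j := by
      rw [hr]; push_cast; ring
    rw [show c i * conj (c j) / ((1 - 2 * (z i * conj (z j)).re : ℝ) : ℂ)
        = c i * conj (c j) * (1 - r i j)⁻¹ by rw [div_eq_mul_inv, hx]]
    exact h
  -- sum over all pairs
  have hsum : HasSum (fun n : ℕ => ∑ i, ∑ j, c i * conj (c j) * (r i j) ^ n)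
      (∑ i, ∑ j, c i * conj (c j) / ((1 - 2 * (z i * conj (z j)).re : ℝ) : ℂ)) := by
    apply hasSum_sum
    intro i _
    exact hasSum_sum fun j _ => hgeom i j
  -- each term is nonnegative
  have hterm : ∀ n : ℕ, (0 : ℂ) ≤ ∑ i, ∑ j, c i * conj (c j) * (r i j) ^ n := by
    intro n
    have hr' : ∀ i j, r i j = z i * conj (z j) + conj (z i) * z j := by
      intro i j
      rw [hr]
      rw [show conj (z i) * z j = conj (z i * conj (z j)) by
        rw [map_mul, Complex.conj_conj], Complex.add_conj]
    have := drury_arveson_term_nonneg N z c n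
    simpa only [hr'] using this
  exact hasSum_mono hasSum_zero hsum fun n => hterm n
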